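/- Let d be a natural number, N a finite type, x : N → (Fin d → ℝ) a family of points, θ : Fin d → ℝ a vector of inverse length-scales, and σ_f : ℝ. Then the squared exponential kernel matrix M : Matrix N N ℝ defined by M p q = σ_f² * Real.exp (−∑ i, θ i ^ 2 * (x p i − x q i) ^ 2) is positive semidefinite. -/

import Mathlib

open Matrix Nat

/-- The squared exponential kernel matrix
`M p q = σ_f² * exp(−∑ i, θ i² (x p i − x q i)²)` is positive semidefinite. -/
theorem squaredExponential_posSemidef (d : ℕ) {N : Type*} [Fintype N]
    (x : N → Fin d → ℝ) (θ : Fin d → ℝ) (σf : ℝ) :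
    Matrix.PosSemidef (Matrix.of fun p q : N =>
      σf ^ 2 * Real.exp (-∑ i, θ i ^ 2 * (x p i - x q i) ^ 2)) := by
  set a : N → Fin d → ℝ := fun p i => θ i * x p i with ha
  set s : N → ℝ := fun p => ∑ i, (a p i) ^ 2 with hs
  set t : N → N → ℝ := fun p q => ∑ i, a p i * a q i with ht
  rw [Matrix.posSemidef_iff_dotProduct_mulVec]
  constructor
  · ext p q
    simp only [Matrix.conjTranspose_apply, Matrix.of_apply, star_trivial]
    have h : ∀ i : Fin d, θ i ^ 2 * (x q i - x p i) ^ 2 = θ i ^ 2 * (x p i - x q i) ^ 2 :=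
      fun i => by ring
    simp [h]
  · intro z
    set w : N → ℝ := fun p => σf * z p * Real.exp (-s p) with hw
    have key : star z ⬝ᵥ (Matrix.of fun p q : N =>
        σf ^ 2 * Real.exp (-∑ i, θ i ^ 2 * (x p i - x q i) ^ 2)) *ᵥ z
        = ∑ p, ∑ q, w p * w q * Real.exp (2 * t p q) := by
      simp only [dotProduct, Matrix.mulVec, Matrix.of_apply, Finset.mul_sum]
      refine Finset.sum_congr rfl fun p _ => Finset.sum_congr rfl fun q _ => ?_
      have hexp : (-∑ i, θ i ^ 2 * (x p i - x q i) ^ 2) = (-s p) + (-s q) + 2 * t p q := by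
        simp only [hs, ht, ha, Finset.mul_sum, ← Finset.sum_add_distrib, ← Finset.sum_neg_distrib]
        refine Finset.sum_congr rfl fun i _ => ?_
        ring
      rw [hexp, Real.exp_add, Real.exp_add, hw]
      simp only [star_trivial]
      ring
    rw [key]
    have hexpand : ∀ p q : N, w p * w q * Real.exp (2 * t p q)
        = ∑' n : ℕ, w p * w q * ((2 * t p q) ^ n / (n ! : ℝ)) := by
      intro p q
      rw [Real.exp_eq_exp_ℝ, NormedSpace.exp_eq_tsum_div, ← tsum_mul_left]
    simp only [hexpand]
    have hsummable : ∀ p q : N, Summable fun n : ℕ => w p * w q * ((2 * t p q) ^ n / (n ! : ℝ)) :=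
      fun p q => (Real.summable_pow_div_factorial (2 * t p q)).mul_left _
    have hswap : (∑ p, ∑ q, ∑' n : ℕ, w p * w q * ((2 * t p q) ^ n / (n ! : ℝ)))
        = ∑' n : ℕ, ∑ p, ∑ q, w p * w q * ((2 * t p q) ^ n / (n ! : ℝ)) := by
      have h1 : ∀ p : N, (∑ q, ∑' n : ℕ, w p * w q * ((2 * t p q) ^ n / (n ! : ℝ)))
          = ∑' n : ℕ, ∑ q, w p * w q * ((2 * t p q) ^ n / (n ! : ℝ)) :=
        fun p => (Summable.tsum_finsetSum fun q _ => hsummable p q).symm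
      simp only [h1]
      exact (Summable.tsum_finsetSum fun p _ => summable_sum fun q _ => hsummable p q).symm
    rw [hswap]
    refine tsum_nonneg fun n => ?_
    have expand : ∀ p q : N, w p * w q * ((2 * t p q) ^ n / (n ! : ℝ))
        = ((2 : ℝ) ^ n / (n ! : ℝ)) * ∑ j : Fin n → Fin d,
            (w p * ∏ k, a p (j k)) * (w q * ∏ k, a q (j k)) := by
      intro p q
      have htp : t p q = ∑ i, a p i * a q i := rfl
      rw [htp, mul_pow, Fintype.sum_pow (fun i => a p i * a q i) n,
        mul_div_assoc, Finset.sum_div, Finset.mul_sum, Finset.mul_sum, Finset.mul_sum]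
      refine Finset.sum_congr rfl fun j _ => ?_
      rw [Finset.prod_mul_distrib]
      ring
    simp only [expand, ← Finset.mul_sum]
    have hpos : (0 : ℝ) ≤ (2 : ℝ) ^ n / (n ! : ℝ) := by positivity
    refine mul_nonneg hpos ?_
    have hcomm : (∑ p : N, ∑ q : N, ∑ j : Fin n → Fin d,
        (w p * ∏ k, a p (j k)) * (w q * ∏ k, a q (j k)))
        = ∑ j : Fin n → Fin d, (∑ p : N, w p * ∏ k, a p (j k)) ^ 2 := by
      have l1 : (∑ p : N, ∑ q : N, ∑ j : Fin n → Fin d,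
          (w p * ∏ k, a p (j k)) * (w q * ∏ k, a q (j k)))
          = ∑ p : N, ∑ j : Fin n → Fin d, ∑ q : N,
            (w p * ∏ k, a p (j k)) * (w q * ∏ k, a q (j k)) :=
        Finset.sum_congr rfl fun p _ => Finset.sum_comm
      rw [l1, Finset.sum_comm]
      refine Finset.sum_congr rfl fun j _ => ?_
      rw [sq, Finset.sum_mul_sum]
    rw [hcomm]
    exact Finset.sum_nonneg fun j _ => sq_nonneg _
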